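/- Fix R > 0 and for integers k ≥ 2 define γ_k(R) := j_k(R)·R/(h_k(R) + j_k(R)). Then γ_k(R) > 0 for every k ≥ 2, and lim_{k→∞} γ_k(R) = 0. -/

import Mathlib

/-- The modified Bessel function of the first kind of order `m`:
`I_m(r) = ∑ (r/2)^(m+2n) / (n! Γ(m+n+1))`. -/
noncomputable def besselI (m r : ℝ) : ℝ :=
  ∑' n : ℕ, (r / 2) ^ (m + 2 * (n : ℝ)) / ((n.factorial : ℝ) * Real.Gamma (m + (n : ℝ) + 1))

/-- `h_k(R) = ((k²+k)/2 - 1)·I_{k+3/2}(R)/(R·I_{k+1/2}(R))`. -/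
noncomputable def hfun (k : ℕ) (R : ℝ) : ℝ :=
  (((k : ℝ) ^ 2 + k) / 2 - 1) * (besselI ((k : ℝ) + 3 / 2) R / (R * besselI ((k : ℝ) + 1 / 2) R))

/-- `j_k(R) = 1 - 3 I_{3/2}(R)/(R I_{1/2}(R)) - I_{3/2}(R) I_{k+3/2}(R)/(I_{1/2}(R) I_{k+1/2}(R))`. -/
noncomputable def jfun (k : ℕ) (R : ℝ) : ℝ :=
  1 - 3 * besselI (3 / 2) R / (R * besselI (1 / 2) R)
    - besselI (3 / 2) R * besselI ((k : ℝ) + 3 / 2) R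
      / (besselI (1 / 2) R * besselI ((k : ℝ) + 1 / 2) R)

/-- `γ_k(R) = j_k(R)·R/(h_k(R) + j_k(R))`. -/
noncomputable def gammafun (k : ℕ) (R : ℝ) : ℝ :=
  jfun k R * R / (hfun k R + jfun k R)

open Finset Filter

namespace BesselAux


/-- rising factorial -/
noncomputable def asc (x : ℝ) (n : ℕ) : ℝ := ∏ i ∈ Finset.range n, (x + i)

lemma asc_zero (x : ℝ) : asc x 0 = 1 := by simp [asc]

lemma asc_succ (x : ℝ) (n : ℕ) : asc x (n+1) = asc x n * (x + n) :=
  Finset.prod_range_succ _ _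

lemma asc_succ' (x : ℝ) (n : ℕ) : asc x (n+1) = x * asc (x+1) n := by
  rw [asc, Finset.prod_range_succ']
  simp only [Nat.cast_zero, add_zero, asc]
  rw [mul_comm]
  congr 1
  refine Finset.prod_congr rfl fun i _ => ?_
  push_cast
  ring

lemma asc_pos {x : ℝ} (hx : 0 < x) (n : ℕ) : 0 < asc x n := by
  refine Finset.prod_pos fun i _ => by positivity

lemma Gamma_asc {x : ℝ} (hx : 0 < x) (n : ℕ) :
    Real.Gamma (x + n) = asc x n * Real.Gamma x := by
  induction n with
  | zero => simp [asc_zero]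
  | succ n ih =>
    have hxn : x + (n : ℝ) ≠ 0 := by positivity
    have : x + ((n+1 : ℕ) : ℝ) = (x + n) + 1 := by push_cast; ring
    rw [this, Real.Gamma_add_one hxn, ih, asc_succ]
    ring

lemma factorial_le_asc {x : ℝ} (hx : 1 ≤ x) (n : ℕ) : (n.factorial : ℝ) ≤ asc x n := by
  induction n with
  | zero => simp [asc_zero]
  | succ n ih =>
    rw [asc_succ]
    push_cast [Nat.factorial_succ]
    have h1 : ((n : ℝ) + 1) ≤ x + n := by linarith
    have h2 : (0:ℝ) < (n.factorial : ℝ) := by positivity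
    calc ((n:ℝ)+1) * n.factorial ≤ (x + n) * n.factorial := by nlinarith
    _ ≤ (x+n) * asc x n := by nlinarith [asc_pos (by linarith : (0:ℝ) < x) n]
    _ = asc x n * (x+n) := by ring

lemma one_le_asc {x : ℝ} (hx : 1 ≤ x) (n : ℕ) : 1 ≤ asc x n := by
  calc (1:ℝ) ≤ (n.factorial : ℝ) := by exact_mod_cast Nat.one_le_iff_ne_zero.mpr n.factorial_ne_zero
  _ ≤ asc x n := factorial_le_asc hx n

lemma pascal_split (N : ℕ) (X : ℕ → ℝ) :
    ∑ n ∈ range (N+2), ((N+1).choose n : ℝ) * X n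
      = ∑ n ∈ range (N+1), (N.choose n : ℝ) * X n
        + ∑ n ∈ range (N+1), (N.choose n : ℝ) * X (n+1) := by
  rw [Finset.sum_range_succ' (fun n => (((N+1).choose n : ℝ)) * X n) (N+1)]
  have h1 : ∀ i, (((N+1).choose (i+1) : ℕ) : ℝ) = (N.choose i : ℝ) + (N.choose (i+1) : ℝ) := by
    intro i
    rw [Nat.choose_succ_succ]
    push_cast; ring
  simp only [h1, add_mul, Finset.sum_add_distrib]
  have h2 : ∑ i ∈ range (N+1), (N.choose (i+1) : ℝ) * X (i+1) + (N.choose 0 : ℝ) * X 0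
      = ∑ n ∈ range (N+2), (N.choose n : ℝ) * X n :=
    (Finset.sum_range_succ' (fun n => (N.choose n : ℝ) * X n) (N+1)).symm
  rw [Finset.sum_range_succ (fun n => (N.choose n : ℝ) * X n) (N+1)] at h2
  simp only [Nat.choose_succ_self, Nat.cast_zero, zero_mul, add_zero, Nat.choose_zero_right,
    Nat.cast_one, one_mul] at h2 ⊢
  linarith

lemma keyid : ∀ (N : ℕ) (a b : ℝ),
    ∑ n ∈ range (N+1), (N.choose n : ℝ) *
        (asc (a + n) (N - n) * asc (b + ((N - n : ℕ) : ℝ)) n)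
      = asc (a + b + N - 1) N := by
  intro N
  induction N with
  | zero => intro a b; simp [asc_zero]
  | succ N ih =>
    intro a b
    have hsplit := pascal_split N
      (fun n => asc (a + n) (N + 1 - n) * asc (b + ((N + 1 - n : ℕ) : ℝ)) n)
    rw [show N + 1 + 1 = N + 2 from rfl] at *
    rw [hsplit]
    have e1 : ∀ n ∈ range (N+1), (N.choose n : ℝ) *
        (asc (a + n) (N + 1 - n) * asc (b + ((N + 1 - n : ℕ) : ℝ)) n)
        = (N.choose n : ℝ) * ((a + n) *
          (asc ((a+1) + n) (N - n) * asc ((b+1) + ((N - n : ℕ) : ℝ)) n)) := by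
      intro n hn
      have hn' : n ≤ N := by simpa [Nat.lt_succ_iff] using Finset.mem_range.mp hn
      have h1 : N + 1 - n = (N - n) + 1 := by omega
      have h2 : ((N + 1 - n : ℕ) : ℝ) = ((N - n : ℕ) : ℝ) + 1 := by
        rw [h1]; push_cast; ring
      rw [h1, asc_succ' (a + n) (N - n)]
      have A1 : a + (n:ℝ) + 1 = (a+1) + n := by ring
      have A2 : b + ((N - n + 1 : ℕ) : ℝ) = (b+1) + ((N - n : ℕ) : ℝ) := by push_cast; ring
      rw [A1, A2]
      ring
    have e2 : ∀ n ∈ range (N+1), (N.choose n : ℝ) *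
        (asc (a + ((n+1 : ℕ) : ℝ)) (N + 1 - (n+1)) * asc (b + ((N + 1 - (n+1) : ℕ) : ℝ)) (n+1))
        = (N.choose n : ℝ) * ((b + ((N - n : ℕ) : ℝ)) *
          (asc ((a+1) + n) (N - n) * asc ((b+1) + ((N - n : ℕ) : ℝ)) n)) := by
      intro n hn
      have h1 : N + 1 - (n+1) = N - n := by omega
      rw [h1, asc_succ' (b + ((N - n : ℕ) : ℝ)) n]
      have A1 : a + ((n+1 : ℕ) : ℝ) = (a+1) + n := by push_cast; ring
      have A2 : b + ((N - n : ℕ) : ℝ) + 1 = (b+1) + ((N - n : ℕ) : ℝ) := by ring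
      rw [A1, A2]
      ring
    rw [Finset.sum_congr rfl e1, Finset.sum_congr rfl e2]
    have e3 : ∀ n ∈ range (N+1),
        (N.choose n : ℝ) * ((a + n) *
          (asc ((a+1) + n) (N - n) * asc ((b+1) + ((N - n : ℕ) : ℝ)) n))
        + (N.choose n : ℝ) * ((b + ((N - n : ℕ) : ℝ)) *
          (asc ((a+1) + n) (N - n) * asc ((b+1) + ((N - n : ℕ) : ℝ)) n))
        = (a + b + N) * ((N.choose n : ℝ) *
          (asc ((a+1) + n) (N - n) * asc ((b+1) + ((N - n : ℕ) : ℝ)) n)) := by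
      intro n hn
      have hn' : n ≤ N := by simpa [Nat.lt_succ_iff] using Finset.mem_range.mp hn
      have hc : ((N - n : ℕ) : ℝ) = (N : ℝ) - n := by
        rw [Nat.cast_sub hn']
      rw [hc]
      ring
    rw [← Finset.sum_add_distrib, Finset.sum_congr rfl e3, ← Finset.mul_sum, ih (a+1) (b+1)]
    have g1 : (a+1) + (b+1) + (N:ℝ) - 1 = (a + b + (N:ℝ)) + 1 := by ring
    have g2 : a + b + ((N+1 : ℕ) : ℝ) - 1 = a + b + (N:ℝ) := by push_cast; ring
    rw [g1, g2, asc_succ' (a + b + (N:ℝ)) N]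


set_option linter.unusedSectionVars false
noncomputable def term (R m : ℝ) (n : ℕ) : ℝ :=
  (R / 2) ^ (m + 2 * (n : ℝ)) / ((n.factorial : ℝ) * Real.Gamma (m + (n : ℝ) + 1))

lemma besselI_eq (m R : ℝ) : besselI m R = ∑' n, term R m n := rfl

set_option linter.unusedSectionVars false
variable {R : ℝ} (hR : 0 < R)
include hR

lemma term_eq (m : ℝ) (n : ℕ) :
    term R m n = (R/2) ^ m * ((R/2)^2)^n / ((n.factorial : ℝ) * Real.Gamma (m + (n : ℝ) + 1)) := by
  have hq : (0:ℝ) < R/2 := by linarith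
  rw [term, Real.rpow_add hq]
  congr 1
  congr 1
  have : (2 : ℝ) * (n : ℝ) = ((2 * n : ℕ) : ℝ) := by push_cast; ring
  rw [this, Real.rpow_natCast, pow_mul]

lemma Gamma_term_pos {m : ℝ} (hm : 0 ≤ m) (n : ℕ) : 0 < Real.Gamma (m + (n : ℝ) + 1) :=
  Real.Gamma_pos_of_pos (by positivity)

lemma term_pos {m : ℝ} (hm : 0 ≤ m) (n : ℕ) : 0 < term R m n := by
  rw [term]
  have hq : (0:ℝ) < R/2 := by linarith
  have := Gamma_term_pos hR hm n
  have := Real.rpow_pos_of_pos hq (m + 2*(n:ℝ))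
  have : (0:ℝ) < (n.factorial : ℝ) := by positivity
  positivity

lemma Gamma_shift {m : ℝ} (hm : 0 ≤ m) (n : ℕ) :
    Real.Gamma (m + (n : ℝ) + 1) = asc (m+1) n * Real.Gamma (m+1) := by
  have : m + (n : ℝ) + 1 = (m + 1) + (n : ℝ) := by ring
  rw [this, Gamma_asc (by linarith : (0:ℝ) < m+1)]

lemma term_le {m : ℝ} (hm : 0 ≤ m) (n : ℕ) :
    term R m n ≤ ((R/2) ^ m / Real.Gamma (m+1)) * (((R/2)^2)^n / (n.factorial : ℝ)) := by
  have hq : (0:ℝ) < R/2 := by linarith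
  rw [term_eq hR, Gamma_shift hR hm]
  have hG : 0 < Real.Gamma (m+1) := Real.Gamma_pos_of_pos (by linarith)
  have ha : 1 ≤ asc (m+1) n := one_le_asc (by linarith) n
  have hfac : (0:ℝ) < (n.factorial : ℝ) := by positivity
  have hnum : 0 ≤ (R/2) ^ m * ((R/2)^2)^n := by positivity
  have hrhs : (R/2) ^ m / Real.Gamma (m+1) * (((R/2)^2)^n / (n.factorial : ℝ))
      = (R/2) ^ m * ((R/2)^2)^n / ((n.factorial : ℝ) * Real.Gamma (m+1)) := by
    field_simp
  rw [hrhs]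
  apply div_le_div₀ hnum le_rfl (by positivity)
  have h3 : (n.factorial:ℝ) * Real.Gamma (m+1) * 1 ≤ (n.factorial:ℝ) * Real.Gamma (m+1) * asc (m+1) n :=
    mul_le_mul_of_nonneg_left ha (by positivity)
  nlinarith [h3]

lemma summable_term {m : ℝ} (hm : 0 ≤ m) : Summable (term R m) := by
  apply Summable.of_nonneg_of_le (fun n => (term_pos hR hm n).le) (term_le hR hm)
  exact (Real.summable_pow_div_factorial ((R/2)^2)).mul_left _

lemma besselI_pos {m : ℝ} (hm : 0 ≤ m) : 0 < besselI m R := by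
  rw [besselI_eq]
  exact Summable.tsum_pos (summable_term hR hm) (fun n => (term_pos hR hm n).le) 0 (term_pos hR hm 0)

lemma besselI_ge {m : ℝ} (hm : 0 ≤ m) : (R/2) ^ m / Real.Gamma (m+1) ≤ besselI m R := by
  rw [besselI_eq]
  have h0 : term R m 0 = (R/2) ^ m / Real.Gamma (m+1) := by
    rw [term]; push_cast; norm_num
  rw [← h0]
  exact Summable.le_tsum (summable_term hR hm) 0 (fun n _ => (term_pos hR hm n).le)

noncomputable def Ex (R : ℝ) : ℝ := ∑' n : ℕ, ((R/2)^2)^n / (n.factorial : ℝ)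

lemma Ex_pos : 0 < Ex R := by
  refine Summable.tsum_pos (Real.summable_pow_div_factorial _) (fun n => by positivity) 0 (by norm_num)

lemma besselI_le {m : ℝ} (hm : 0 ≤ m) :
    besselI m R ≤ (R/2) ^ m / Real.Gamma (m+1) * Ex R := by
  rw [besselI_eq, Ex, ← tsum_mul_left]
  exact Summable.tsum_le_tsum (fun n => by
      have := term_le hR hm n
      simpa [mul_div_assoc] using this)
    (summable_term hR hm) ((Real.summable_pow_div_factorial _).mul_left _)

lemma besselI_rec {m : ℝ} (hm : 0 ≤ m) :
    besselI m R * R = besselI (m+2) R * R + 2*(m+1) * besselI (m+1) R := by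
  have hq : (0:ℝ) < R/2 := by linarith
  have h1 : Summable (fun n => R * term R m n) := (summable_term hR hm).mul_left R
  have h2 : Summable (fun n => 2*(m+1) * term R (m+1) n) :=
    (summable_term hR (by linarith : (0:ℝ) ≤ m+1)).mul_left _
  have hs : Summable (fun n => R * term R m n - 2*(m+1) * term R (m+1) n) := h1.sub h2
  have d0 : R * term R m 0 - 2*(m+1) * term R (m+1) 0 = 0 := by
    rw [term, term]
    push_cast
    norm_num
    have G2 : Real.Gamma (m+1+1) = (m+1) * Real.Gamma (m+1) :=
      Real.Gamma_add_one (by positivity)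
    have hh : (R/2) ^ (m+1) = (R/2) ^ m * (R/2) := by
      rw [Real.rpow_add hq, Real.rpow_one]
    rw [G2, hh]
    have hG : Real.Gamma (m+1) ≠ 0 := (Real.Gamma_pos_of_pos (by linarith)).ne'
    field_simp
    ring
  have dsucc : ∀ n : ℕ,
      R * term R m (n+1) - 2*(m+1) * term R (m+1) (n+1) = R * term R (m+2) n := by
    intro n
    rw [term_eq hR, term_eq hR, term_eq hR]
    have c1 : m + ((n+1 : ℕ) : ℝ) + 1 = (m + (n:ℝ) + 2) := by push_cast; ring
    have c2 : m + 1 + ((n+1 : ℕ) : ℝ) + 1 = (m + (n:ℝ) + 2) + 1 := by push_cast; ring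
    have c3 : m + 2 + (n : ℝ) + 1 = (m + (n:ℝ) + 2) + 1 := by ring
    rw [c1, c2, c3]
    have G3 : Real.Gamma ((m + (n:ℝ) + 2) + 1) = (m + (n:ℝ) + 2) * Real.Gamma (m + (n:ℝ) + 2) :=
      Real.Gamma_add_one (by positivity)
    rw [G3]
    have hG : Real.Gamma (m + (n:ℝ) + 2) ≠ 0 := (Real.Gamma_pos_of_pos (by positivity)).ne'
    have hh1 : (R/2) ^ (m+1) = (R/2) ^ m * (R/2) := by
      rw [Real.rpow_add hq, Real.rpow_one]
    have hh2 : (R/2) ^ (m+2) = (R/2) ^ m * ((R/2)^2 : ℝ) := by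
      rw [Real.rpow_add hq, show ((2:ℝ)) = ((2:ℕ):ℝ) by norm_num, Real.rpow_natCast]
    rw [hh1, hh2]
    have hfac : ((n+1 : ℕ).factorial : ℝ) = ((n:ℝ)+1) * (n.factorial : ℝ) := by
      rw [Nat.factorial_succ]; push_cast; ring
    rw [hfac, pow_succ]
    have hf0 : ((n.factorial : ℝ)) ≠ 0 := by positivity
    have hmn : (m + (n:ℝ) + 2) ≠ 0 := by positivity
    have hn1 : ((n:ℝ)+1) ≠ 0 := by positivity
    field_simp
    ring
  have key : (∑' n, (R * term R m n - 2*(m+1) * term R (m+1) n)) = R * besselI (m+2) R := by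
    rw [Summable.tsum_eq_zero_add hs, d0, zero_add]
    rw [tsum_congr dsucc, tsum_mul_left, besselI_eq]
  rw [Summable.tsum_sub h1 h2, tsum_mul_left, tsum_mul_left, ← besselI_eq, ← besselI_eq] at key
  rw [besselI_eq, besselI_eq, besselI_eq] at *
  linarith [key]


lemma summable_norm_term {m : ℝ} (hm : 0 ≤ m) : Summable (fun n => ‖term R m n‖) := by
  simpa [Real.norm_eq_abs, abs_of_pos (term_pos hR hm _)] using summable_term hR hm

lemma diag_eq {m m' : ℝ} (hm : 0 ≤ m) (hm' : 0 ≤ m') (N : ℕ) :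
    ∑ n ∈ range (N+1), term R m n * term R m' (N-n)
      = (R/2) ^ (m+m') * ((R/2)^2)^N * asc (m+m'+N+1) N
        / ((N.factorial : ℝ) * (Real.Gamma (m+N+1) * Real.Gamma (m'+N+1))) := by
  have hq : (0:ℝ) < R/2 := by linarith
  have step : ∀ n ∈ range (N+1), term R m n * term R m' (N-n)
      = ((R/2) ^ (m+m') * ((R/2)^2)^N
          / ((N.factorial : ℝ) * (Real.Gamma (m+N+1) * Real.Gamma (m'+N+1))))
        * ((N.choose n : ℝ) *
            (asc ((m+1) + n) (N - n) * asc ((m'+1) + ((N - n : ℕ) : ℝ)) n)) := by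
    intro n hn
    have hn' : n ≤ N := by simpa [Nat.lt_succ_iff] using Finset.mem_range.mp hn
    rw [term_eq hR, term_eq hR]
    have hA : Real.Gamma (m + (N:ℝ) + 1) = asc ((m+1) + n) (N - n) * Real.Gamma (m + (n:ℝ) + 1) := by
      have h1 : ((m+1) + (n:ℝ)) + ((N - n : ℕ) : ℝ) = m + (N:ℝ) + 1 := by
        rw [Nat.cast_sub hn']; ring
      have h2 := Gamma_asc (show (0:ℝ) < (m+1) + (n:ℝ) by positivity) (N - n)
      rw [h1] at h2
      rw [h2]
      congr 1
      ring
    have hB : Real.Gamma (m' + (N:ℝ) + 1)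
        = asc ((m'+1) + ((N - n : ℕ) : ℝ)) n * Real.Gamma (m' + ((N - n : ℕ) : ℝ) + 1) := by
      have h1 : ((m'+1) + ((N - n : ℕ) : ℝ)) + (n:ℝ) = m' + (N:ℝ) + 1 := by
        rw [Nat.cast_sub hn']; ring
      have h2 := Gamma_asc (show (0:ℝ) < (m'+1) + ((N - n : ℕ) : ℝ) by positivity) n
      rw [h1] at h2
      rw [h2]
      congr 1
      ring
    have hfacN : ((N.factorial : ℝ)) = (N.choose n : ℝ) * ((n.factorial : ℝ) * ((N-n).factorial : ℝ)) := by
      rw [← Nat.choose_mul_factorial_mul_factorial hn']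
      push_cast; ring
    have hpow : ((R/2)^2)^N = ((R/2)^2)^n * ((R/2)^2)^(N-n) := by
      rw [← pow_add, Nat.add_sub_cancel' hn']
    have hrpow : (R/2) ^ (m+m') = (R/2) ^ m * (R/2) ^ m' := Real.rpow_add hq m m'
    rw [hA, hB, hfacN, hpow, hrpow]
    set P := (R/2) ^ m with hPdef
    set P' := (R/2) ^ m' with hP'def
    set Q := ((R/2)^2)^n with hQdef
    set Q' := ((R/2)^2)^(N-n) with hQ'def
    set G1 := Real.Gamma (m + (n:ℝ) + 1) with hG1def
    set G2 := Real.Gamma (m' + ((N - n : ℕ) : ℝ) + 1) with hG2def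
    set A1 := asc ((m+1) + (n:ℝ)) (N - n) with hA1def
    set A2 := asc ((m'+1) + ((N - n : ℕ) : ℝ)) n with hA2def
    have hG1 : G1 ≠ 0 := (Real.Gamma_pos_of_pos (by positivity)).ne'
    have hG2 : G2 ≠ 0 := (Real.Gamma_pos_of_pos (by positivity)).ne'
    have hb1 : (n.factorial : ℝ) ≠ 0 := by positivity
    have hb2 : (((N-n).factorial : ℕ) : ℝ) ≠ 0 := by positivity
    have hb3 : (N.choose n : ℝ) ≠ 0 := by
      have := Nat.choose_pos hn'; positivity
    have hA1 : A1 ≠ 0 := by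
      rw [hA1def]
      exact (asc_pos (by positivity) _).ne'
    have hA2 : A2 ≠ 0 := by
      rw [hA2def]
      exact (asc_pos (by positivity) _).ne'
    field_simp
  rw [Finset.sum_congr rfl step, ← Finset.mul_sum, keyid N (m+1) (m'+1)]
  have : (m+1) + (m'+1) + (N:ℝ) - 1 = m+m'+(N:ℝ)+1 := by ring
  rw [this]
  ring

lemma diag_lt {k : ℕ} (hk : 2 ≤ k) (N : ℕ) :
    ∑ n ∈ range (N+1), term R (3/2) n * term R ((k:ℝ)+3/2) (N-n)
      < ∑ n ∈ range (N+1), term R (5/2) n * term R ((k:ℝ)+1/2) (N-n) := by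
  have hq : (0:ℝ) < R/2 := by linarith
  rw [diag_eq hR (by norm_num) (by positivity) N, diag_eq hR (by norm_num) (by positivity) N]
  have e1 : (3:ℝ)/2 + ((k:ℝ)+3/2) = (k:ℝ)+3 := by ring
  have e2 : (5:ℝ)/2 + ((k:ℝ)+1/2) = (k:ℝ)+3 := by ring
  have e3 : (k:ℝ)+3 + (N:ℝ) + 1 = (k:ℝ)+(N:ℝ)+4 := by ring
  rw [e1, e2, e3]
  have g1 : Real.Gamma ((3:ℝ)/2 + (N:ℝ) + 1) = Real.Gamma ((N:ℝ) + 5/2) := by norm_num; ring_nf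
  have g2 : Real.Gamma ((k:ℝ)+3/2 + (N:ℝ) + 1) = ((k:ℝ)+(N:ℝ)+3/2) * Real.Gamma ((k:ℝ)+(N:ℝ)+3/2) := by
    rw [show (k:ℝ)+3/2 + (N:ℝ) + 1 = ((k:ℝ)+(N:ℝ)+3/2) + 1 by ring]
    exact Real.Gamma_add_one (by positivity)
  have g3 : Real.Gamma ((5:ℝ)/2 + (N:ℝ) + 1) = ((N:ℝ)+5/2) * Real.Gamma ((N:ℝ) + 5/2) := by
    rw [show (5:ℝ)/2 + (N:ℝ) + 1 = ((N:ℝ)+5/2) + 1 by ring]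
    exact Real.Gamma_add_one (by positivity)
  have g4 : Real.Gamma ((k:ℝ)+1/2 + (N:ℝ) + 1) = Real.Gamma ((k:ℝ)+(N:ℝ)+3/2) := by
    ring_nf
  rw [g1, g2, g3, g4]
  have hnum : 0 < (R/2) ^ ((k:ℝ)+3) * ((R/2)^2)^N * asc ((k:ℝ)+(N:ℝ)+4) N := by
    have := asc_pos (show (0:ℝ) < (k:ℝ)+(N:ℝ)+4 by positivity) N
    have := Real.rpow_pos_of_pos hq ((k:ℝ)+3)
    positivity
  have hG1 : 0 < Real.Gamma ((N:ℝ) + 5/2) := Real.Gamma_pos_of_pos (by positivity)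
  have hG2 : 0 < Real.Gamma ((k:ℝ)+(N:ℝ)+3/2) := Real.Gamma_pos_of_pos (by positivity)
  have hfac : (0:ℝ) < (N.factorial : ℝ) := by positivity
  apply div_lt_div_of_pos_left hnum
  · positivity
  · have hkk : (2:ℝ) ≤ (k:ℝ) := by exact_mod_cast hk
    have hlt : ((N:ℝ)+5/2) < ((k:ℝ)+(N:ℝ)+3/2) := by linarith
    have hd : 0 < (N.factorial:ℝ) * Real.Gamma ((N:ℝ)+5/2) * Real.Gamma ((k:ℝ)+(N:ℝ)+3/2) := by
      positivity
    have h5 := mul_lt_mul_of_pos_left hlt hd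
    calc (N.factorial : ℝ) * (((N:ℝ)+5/2) * Real.Gamma ((N:ℝ) + 5/2) * Real.Gamma ((k:ℝ)+(N:ℝ)+3/2))
        = (N.factorial:ℝ) * Real.Gamma ((N:ℝ)+5/2) * Real.Gamma ((k:ℝ)+(N:ℝ)+3/2) * ((N:ℝ)+5/2) := by
          ring
      _ < (N.factorial:ℝ) * Real.Gamma ((N:ℝ)+5/2) * Real.Gamma ((k:ℝ)+(N:ℝ)+3/2) * ((k:ℝ)+(N:ℝ)+3/2) := h5
      _ = (N.factorial : ℝ) * (Real.Gamma ((N:ℝ) + 5/2) * (((k:ℝ)+(N:ℝ)+3/2) * Real.Gamma ((k:ℝ)+(N:ℝ)+3/2))) := by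
          ring

lemma prod_eq {m m' : ℝ} (hm : 0 ≤ m) (hm' : 0 ≤ m') :
    besselI m R * besselI m' R = ∑' N, ∑ n ∈ range (N+1), term R m n * term R m' (N-n) := by
  rw [besselI_eq, besselI_eq]
  exact tsum_mul_tsum_eq_tsum_sum_range_of_summable_norm
    (summable_norm_term hR hm) (summable_norm_term hR hm')

lemma summable_diag {m m' : ℝ} (hm : 0 ≤ m) (hm' : 0 ≤ m') :
    Summable (fun N => ∑ n ∈ range (N+1), term R m n * term R m' (N-n)) :=
  (summable_norm_sum_mul_range_of_summable_norm
    (summable_norm_term hR hm) (summable_norm_term hR hm')).of_norm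

lemma key_lt {k : ℕ} (hk : 2 ≤ k) :
    besselI (3/2) R * besselI ((k:ℝ)+3/2) R < besselI (5/2) R * besselI ((k:ℝ)+1/2) R := by
  rw [prod_eq hR (by norm_num) (by positivity), prod_eq hR (by norm_num) (by positivity)]
  exact Summable.tsum_lt_tsum (fun N => (diag_lt hR hk N).le) (diag_lt hR hk 0)
    (summable_diag hR (by norm_num) (by positivity))
    (summable_diag hR (by norm_num) (by positivity))


lemma jfun_pos {k : ℕ} (hk : 2 ≤ k) : 0 < jfun k R := by
  rw [jfun]
  have hA : 0 < besselI (1/2) R := besselI_pos hR (by norm_num)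
  have hB : 0 < besselI (3/2) R := besselI_pos hR (by norm_num)
  have hC : 0 < besselI (5/2) R := besselI_pos hR (by norm_num)
  have hD : 0 < besselI ((k:ℝ)+1/2) R := besselI_pos hR (by positivity)
  have hE : 0 < besselI ((k:ℝ)+3/2) R := besselI_pos hR (by positivity)
  set A := besselI (1/2) R
  set B := besselI (3/2) R
  set C := besselI (5/2) R
  set D := besselI ((k:ℝ)+1/2) R
  set E := besselI ((k:ℝ)+3/2) R
  have hrec : A * R = C * R + 3 * B := by
    have := besselI_rec hR (show (0:ℝ) ≤ 1/2 by norm_num)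
    rw [show (1:ℝ)/2+2 = 5/2 by norm_num, show (1:ℝ)/2+1 = 3/2 by norm_num] at this
    rw [this]; norm_num; rfl
  have key : B * E < C * D := key_lt hR hk
  have hsum : 3*B/(R*A) + B*E/(A*D) < 1 := by
    rw [div_add_div _ _ (by positivity) (by positivity), div_lt_one (by positivity)]
    have h6 : (R*A)*(A*D) = A*R*C*D + 3*A*B*D := by
      linear_combination (A*D) * hrec
    have p1 : 0 < A*R*(C*D - B*E) := by
      have := sub_pos.mpr key; positivity
    nlinarith [h6, p1]
  linarith

lemma jfun_lt_one (k : ℕ) : jfun k R < 1 := by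
  rw [jfun]
  have hA : 0 < besselI (1/2) R := besselI_pos hR (by norm_num)
  have hB : 0 < besselI (3/2) R := besselI_pos hR (by norm_num)
  have hD : 0 < besselI ((k:ℝ)+1/2) R := besselI_pos hR (by positivity)
  have hE : 0 < besselI ((k:ℝ)+3/2) R := besselI_pos hR (by positivity)
  have h1 : 0 < 3 * besselI (3/2) R / (R * besselI (1/2) R) := by positivity
  have h2 : 0 < besselI (3/2) R * besselI ((k:ℝ)+3/2) R
      / (besselI (1/2) R * besselI ((k:ℝ)+1/2) R) := by positivity
  linarith

lemma hfun_ge {k : ℕ} (hk : 2 ≤ k) : ((k:ℝ)-1)/(4*Ex R) ≤ hfun k R := by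
  have hq : (0:ℝ) < R/2 := by linarith
  have hEx : 0 < Ex R := Ex_pos hR
  have hD : 0 < besselI ((k:ℝ)+1/2) R := besselI_pos hR (by positivity)
  have hE : 0 < besselI ((k:ℝ)+3/2) R := besselI_pos hR (by positivity)
  have hG : 0 < Real.Gamma ((k:ℝ)+3/2) := Real.Gamma_pos_of_pos (by positivity)
  have hL : (R/2) ^ ((k:ℝ)+3/2) / Real.Gamma ((k:ℝ)+3/2+1) ≤ besselI ((k:ℝ)+3/2) R :=
    besselI_ge hR (by positivity)
  have hU : R * besselI ((k:ℝ)+1/2) R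
      ≤ R * ((R/2) ^ ((k:ℝ)+1/2) / Real.Gamma ((k:ℝ)+1/2+1) * Ex R) :=
    mul_le_mul_of_nonneg_left (besselI_le hR (by positivity)) hR.le
  have hstep : ((R/2) ^ ((k:ℝ)+3/2) / Real.Gamma ((k:ℝ)+3/2+1))
        / (R * ((R/2) ^ ((k:ℝ)+1/2) / Real.Gamma ((k:ℝ)+1/2+1) * Ex R))
      ≤ besselI ((k:ℝ)+3/2) R / (R * besselI ((k:ℝ)+1/2) R) :=
    div_le_div₀ hE.le hL (by positivity) hU
  have hLU : ((R/2) ^ ((k:ℝ)+3/2) / Real.Gamma ((k:ℝ)+3/2+1))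
        / (R * ((R/2) ^ ((k:ℝ)+1/2) / Real.Gamma ((k:ℝ)+1/2+1) * Ex R))
      = 1/((2*(k:ℝ)+3) * Ex R) := by
    have g1 : Real.Gamma ((k:ℝ)+3/2+1) = ((k:ℝ)+3/2) * Real.Gamma ((k:ℝ)+3/2) :=
      Real.Gamma_add_one (by positivity)
    have g2 : Real.Gamma ((k:ℝ)+1/2+1) = Real.Gamma ((k:ℝ)+3/2) := by ring_nf
    have g3 : (R/2) ^ ((k:ℝ)+3/2) = (R/2) ^ ((k:ℝ)+1/2) * (R/2) := by
      rw [show (k:ℝ)+3/2 = ((k:ℝ)+1/2)+1 by ring, Real.rpow_add hq, Real.rpow_one]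
    rw [g1, g2, g3]
    have hp : (0:ℝ) < (R/2) ^ ((k:ℝ)+1/2) := Real.rpow_pos_of_pos hq _
    field_simp
  rw [hLU] at hstep
  have hco : (0:ℝ) ≤ ((k:ℝ)^2+(k:ℝ))/2 - 1 := by
    have : (2:ℝ) ≤ (k:ℝ) := by exact_mod_cast hk
    nlinarith
  have h1 : (((k:ℝ)^2+(k:ℝ))/2 - 1) * (1/((2*(k:ℝ)+3) * Ex R)) ≤ hfun k R := by
    rw [hfun]
    exact mul_le_mul_of_nonneg_left hstep hco
  refine le_trans ?_ h1
  rw [mul_one_div, div_le_div_iff₀ (by positivity) (by positivity)]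
  have hkk : (2:ℝ) ≤ (k:ℝ) := by exact_mod_cast hk
  nlinarith [hEx, hkk, mul_nonneg (sub_nonneg.mpr hkk) hEx.le]

lemma hfun_pos {k : ℕ} (hk : 2 ≤ k) : 0 < hfun k R := by
  refine lt_of_lt_of_le ?_ (hfun_ge hR hk)
  have hkk : (2:ℝ) ≤ (k:ℝ) := by exact_mod_cast hk
  have hEx : 0 < Ex R := Ex_pos hR
  apply div_pos (by linarith) (by positivity)

lemma gammafun_pos {k : ℕ} (hk : 2 ≤ k) : 0 < gammafun k R := by
  rw [gammafun]
  exact div_pos (mul_pos (jfun_pos hR hk) hR) (add_pos (hfun_pos hR hk) (jfun_pos hR hk))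

lemma gammafun_le {k : ℕ} (hk : 2 ≤ k) : gammafun k R ≤ R * (4 * Ex R) / ((k:ℝ)-1) := by
  have hEx : 0 < Ex R := Ex_pos hR
  have hkk : (2:ℝ) ≤ (k:ℝ) := by exact_mod_cast hk
  have hj := jfun_pos hR hk
  have hj1 := jfun_lt_one hR k
  have hh := hfun_pos hR hk
  have hlow : 0 < ((k:ℝ)-1)/(4*Ex R) := div_pos (by linarith) (by positivity)
  have s1 : gammafun k R ≤ R / hfun k R := by
    rw [gammafun]
    apply div_le_div₀ hR.le ?_ hh (by linarith)
    nlinarith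
  have s2 : R / hfun k R ≤ R / (((k:ℝ)-1)/(4*Ex R)) := by
    apply div_le_div_of_nonneg_left hR.le ?_ ?_
    · exact hlow
    · exact hfun_ge hR hk
  have s3 : R / (((k:ℝ)-1)/(4*Ex R)) = R * (4 * Ex R) / ((k:ℝ)-1) := by
    rw [div_div_eq_mul_div]
  linarith


end BesselAux

theorem stmt7 (R : ℝ) (hR : 0 < R) :
    (∀ k : ℕ, 2 ≤ k → 0 < gammafun k R) ∧
    Filter.Tendsto (fun k : ℕ => gammafun k R) Filter.atTop (nhds 0) := by
  constructor
  · intro k hk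
    exact BesselAux.gammafun_pos hR hk
  · have hb : Filter.Tendsto (fun k : ℕ => R * (4 * BesselAux.Ex R) / ((k:ℝ)-1))
        Filter.atTop (nhds 0) := by
      apply Filter.Tendsto.div_atTop tendsto_const_nhds
      have := Filter.tendsto_atTop_add_const_right Filter.atTop (-1 : ℝ)
        tendsto_natCast_atTop_atTop
      simpa [sub_eq_add_neg] using this
    apply squeeze_zero' ?_ ?_ hb
    · filter_upwards [Filter.eventually_ge_atTop 2] with k hk
      exact (BesselAux.gammafun_pos hR hk).le
    · filter_upwards [Filter.eventually_ge_atTop 2] with k hk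
      exact BesselAux.gammafun_le hR hk
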